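/- arXiv:1204.5218 — 7 statements merged into one kernel-verified Lean document; each statement's English description precedes it below -/
import Mathlib

section
/- Let v₁, v₂ ∈ ℤ³ be primitive vectors. If {v₁, v₂} is not a fundamental pair, then max{‖v₁ + v₂‖, ‖v₁ − v₂‖} > max{‖v₁‖, ‖v₂‖} ≥ min{‖v₁ + v₂‖, ‖v₁ − v₂‖}. (Lemma NormRankTwo.) -/
/-- The Euclidean norm of an integer vector in `ℤ³`, regarded as a vector in `ℝ³`. -/
noncomputable def enorm3 (v : Fin 3 → ℤ) : ℝ :=
  Real.sqrt (∑ i, ((v i : ℝ)) ^ 2)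

/-- `v ≈ w` : the coordinates agree in absolute value. -/
def vApprox (v w : Fin 3 → ℤ) : Prop := ∀ i, |v i| = |w i|

/-- `v ≺ w` : either `‖v‖ < ‖w‖`, or `‖v‖ = ‖w‖` and `v` precedes `w` lexicographically
in the absolute values of the entries. -/
def vPrec (v w : Fin 3 → ℤ) : Prop :=
  enorm3 v < enorm3 w ∨
    (enorm3 v = enorm3 w ∧
      ∃ i : Fin 3, |v i| < |w i| ∧ ∀ j : Fin 3, j < i → |v j| = |w j|)

/-- A vector of `ℤ³` is primitive if the gcd of its coordinates is `1`. -/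
def IsPrimitiveVec (v : Fin 3 → ℤ) : Prop := Finset.univ.gcd v = 1

/-- A pair of primitive vectors is a fundamental pair when `v₁ ± v₂ ≻ v₁, v₂`. -/
def FundamentalPair (v₁ v₂ : Fin 3 → ℤ) : Prop :=
  vPrec v₁ (v₁ + v₂) ∧ vPrec v₂ (v₁ + v₂) ∧ vPrec v₁ (v₁ - v₂) ∧ vPrec v₂ (v₁ - v₂)

lemma enorm3_nonneg (v : Fin 3 → ℤ) : 0 ≤ enorm3 v := Real.sqrt_nonneg _

lemma sq_enorm3 (v : Fin 3 → ℤ) : enorm3 v ^ 2 = ∑ i, ((v i : ℝ)) ^ 2 :=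
  Real.sq_sqrt (Finset.sum_nonneg fun i _ => sq_nonneg _)

lemma enorm3_pos (v : Fin 3 → ℤ) (hv : IsPrimitiveVec v) : 0 < enorm3 v := by
  have hne : ∃ i, v i ≠ 0 := by
    by_contra hc
    push_neg at hc
    have : Finset.univ.gcd v = 0 := Finset.gcd_eq_zero_iff.2 fun i _ => hc i
    rw [IsPrimitiveVec, this] at hv
    exact one_ne_zero hv.symm
  obtain ⟨i, hi⟩ := hne
  have h1 : (0:ℝ) < ((v i : ℝ))^2 := by positivity
  have h2 : ((v i : ℝ))^2 ≤ ∑ j, ((v j : ℝ))^2 :=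
    Finset.single_le_sum (f := fun j => ((v j : ℝ))^2) (fun j _ => sq_nonneg _)
      (Finset.mem_univ i)
  exact Real.sqrt_pos.2 (lt_of_lt_of_le h1 h2)

lemma parallelogram (v₁ v₂ : Fin 3 → ℤ) :
    enorm3 (v₁ + v₂) ^ 2 + enorm3 (v₁ - v₂) ^ 2 = 2 * enorm3 v₁ ^ 2 + 2 * enorm3 v₂ ^ 2 := by
  simp only [sq_enorm3, Fin.sum_univ_three, Pi.add_apply, Pi.sub_apply, Int.cast_add,
    Int.cast_sub]
  ring

lemma key (a b p m : ℝ) (ha : 0 < a) (hb : 0 < b) (hp : 0 ≤ p) (hm : 0 ≤ m)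
    (hpar : p ^ 2 + m ^ 2 = 2 * a ^ 2 + 2 * b ^ 2) (hle : p ≤ a) :
    max p m > max a b ∧ max a b ≥ min p m := by
  have hp2 : p ^ 2 ≤ a ^ 2 := pow_le_pow_left₀ hp hle 2
  have hma : a < m := lt_of_pow_lt_pow_left₀ 2 hm (by nlinarith)
  have hmb : b < m := lt_of_pow_lt_pow_left₀ 2 hm (by nlinarith)
  constructor
  · exact lt_of_lt_of_le (max_lt hma hmb) (le_max_right p m)
  · exact le_trans (min_le_left p m) (le_trans hle (le_max_left a b))

/-- Lemma (NormRankTwo): if a pair of primitive vectors of `ℤ³` is not fundamental, then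
`max ‖v₁ ± v₂‖ > max ‖v₁‖ ‖v₂‖ ≥ min ‖v₁ ± v₂‖`. -/
theorem normRankTwo (v₁ v₂ : Fin 3 → ℤ)
    (h₁ : IsPrimitiveVec v₁) (h₂ : IsPrimitiveVec v₂)
    (h : ¬ FundamentalPair v₁ v₂) :
    max (enorm3 (v₁ + v₂)) (enorm3 (v₁ - v₂)) > max (enorm3 v₁) (enorm3 v₂) ∧
      max (enorm3 v₁) (enorm3 v₂) ≥ min (enorm3 (v₁ + v₂)) (enorm3 (v₁ - v₂)) := by
  set a := enorm3 v₁ with ha'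
  set b := enorm3 v₂ with hb'
  set p := enorm3 (v₁ + v₂) with hp'
  set m := enorm3 (v₁ - v₂) with hm'
  have ha : 0 < a := enorm3_pos v₁ h₁
  have hb : 0 < b := enorm3_pos v₂ h₂
  have hp : 0 ≤ p := enorm3_nonneg _
  have hm : 0 ≤ m := enorm3_nonneg _
  have hpar : p ^ 2 + m ^ 2 = 2 * a ^ 2 + 2 * b ^ 2 := parallelogram v₁ v₂
  rw [FundamentalPair, not_and_or, not_and_or, not_and_or] at h
  rcases h with h | h | h | h
  · exact key a b p m ha hb hp hm hpar (le_of_not_gt fun hlt => h (Or.inl hlt))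
  · have := key b a p m hb ha hp hm (by linarith) (le_of_not_gt fun hlt => h (Or.inl hlt))
    rwa [max_comm b a] at this
  · have := key a b m p ha hb hm hp (by linarith) (le_of_not_gt fun hlt => h (Or.inl hlt))
    rwa [max_comm m p, min_comm m p] at this
  · have := key b a m p hb ha hm hp (by linarith) (le_of_not_gt fun hlt => h (Or.inl hlt))
    rwa [max_comm m p, min_comm m p, max_comm b a] at this
end

section
/- Let {v₁, v₂, v₃} be a ℤ-basis of ℤ³ (i.e., the 3×3 integer matrix with columns v₁, v₂, v₃ has determinant ±1). If every pair {v_i, v_j} with 1 ≤ i ≠ j ≤ 3 is a fundamental pair, then {v₁, v₂, v₃} ⊆ {±e₁, ±e₂, ±e₃}, where e₁, e₂, e₃ is the standard basis of ℤ³. (Main Theorem.) -/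
/-- `{v₁, v₂, v₃}` is a `ℤ`-basis of `ℤ³`: the matrix with columns `v₁, v₂, v₃` has
determinant `±1`. -/
def IsZBasis (v₁ v₂ v₃ : Fin 3 → ℤ) : Prop :=
  (Matrix.of fun i j => ![v₁, v₂, v₃] j i).det = 1 ∨
    (Matrix.of fun i j => ![v₁, v₂, v₃] j i).det = -1



set_option maxHeartbeats 1000000

lemma gramOrd (a b c p q r : ℤ) (ha : 1 ≤ a) (hab : a ≤ b) (hbc : b ≤ c)
    (hp : 4*p^2 ≤ b^2) (hq : 4*q^2 ≤ a^2) (hr : 4*r^2 ≤ a^2)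
    (hdet : a*b*c + 2*p*q*r - a*p^2 - b*q^2 - c*r^2 = 1) :
    a = 1 ∧ b = 1 ∧ c = 1 := by
  by_cases hA : a = 1
  · subst hA
    have hq0 : q = 0 := by nlinarith [sq_nonneg q]
    have hr0 : r = 0 := by nlinarith [sq_nonneg r]
    subst hq0; subst hr0
    have hd : b*c - p^2 = 1 := by linear_combination hdet
    have hbc1 : b * c ≤ 1 := by nlinarith [sq_nonneg p]
    have hb1 : b = 1 := by nlinarith
    have hc1 : c = 1 := by nlinarith
    exact ⟨rfl, hb1, hc1⟩
  · exfalso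
    have ha2 : 2 ≤ a := by omega
    have hb2 : 2 ≤ b := by omega
    have hc2 : 2 ≤ c := by omega
    -- bound on 8pqr
    have hprod : (8*p*q*r)^2 ≤ (a*a*b)^2 := by
      have h1 : (4*p^2)*(4*q^2) ≤ b^2*a^2 :=
        mul_le_mul hp hq (by positivity) (by positivity)
      have h2 : ((4*p^2)*(4*q^2))*(4*r^2) ≤ (b^2*a^2)*(a^2) :=
        mul_le_mul h1 hr (by positivity) (by positivity)
      nlinarith [h2]
    have habpos : (0:ℤ) < a*a*b := by positivity
    have h8 : -(a*a*b) ≤ 8*p*q*r := by nlinarith [sq_nonneg (8*p*q*r + a*a*b)]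
    have h8' : 8*p*q*r ≤ a*a*b := by nlinarith [sq_nonneg (8*p*q*r - a*a*b)]
    -- c = b
    have h1 : a*(4*p^2) ≤ a*b^2 := by nlinarith
    have h2 : b*(4*q^2) ≤ b*a^2 := by nlinarith
    have h3 : c*(4*r^2) ≤ c*a^2 := by nlinarith
    have h4 : c*a*a ≤ c*a*b := mul_le_mul_of_nonneg_left hab (by positivity)
    have h6 : a*a*b ≤ a*b*b := by nlinarith [mul_le_mul_of_nonneg_left hab (show (0:ℤ) ≤ a*b by positivity)]
    have hcb : c ≤ b := by
      by_contra hcc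
      push_neg at hcc
      have h5 : a*b*1 ≤ a*b*(c-b) := by
        apply mul_le_mul_of_nonneg_left (by omega) (by positivity)
      nlinarith [h1,h2,h3,h4,h5,h6,h8,hdet]
    have hcb' : c = b := le_antisymm hcb hbc
    subst hcb'
    -- c = a
    have h5 : c*(4*r^2) ≤ c*a^2 := by nlinarith
    have hba : c ≤ a := by
      by_contra hbb
      push_neg at hbb
      have h7 : a*c*1 ≤ a*c*(c-a) := by
        apply mul_le_mul_of_nonneg_left (by omega) (by positivity)
      nlinarith [h1,h2,h5,h7,h6,h8,hdet]
    have hba' : c = a := le_antisymm hba hab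
    subst hba'
    -- cube case: a = b = c = t ≥ 2
    rcases Int.even_or_odd c with ⟨k, hk⟩ | ⟨k, hk⟩
    · subst hk
      have h2' : 2*(k*((k+k)^2 - p^2 - q^2 - r^2) + p*q*r) = 1 := by
        linear_combination hdet
      have : (2:ℤ) ∣ 1 := ⟨_, h2'.symm⟩
      norm_num at this
    · subst hk
      have hk1 : 1 ≤ k := by omega
      -- 2|p| ≤ 2k etc
      have hp2 : p^2 ≤ k^2 := by
        have hu : 2*p ≤ 2*k+1 := by nlinarith [hp]
        have hl : -(2*k+1) ≤ 2*p := by nlinarith [hp]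
        have hu' : p ≤ k := by omega
        have hl' : -k ≤ p := by omega
        nlinarith
      have hq2 : q^2 ≤ k^2 := by
        have hu : 2*q ≤ 2*k+1 := by nlinarith [hq]
        have hl : -(2*k+1) ≤ 2*q := by nlinarith [hq]
        have hu' : q ≤ k := by omega
        have hl' : -k ≤ q := by omega
        nlinarith
      have hr2 : r^2 ≤ k^2 := by
        have hu : 2*r ≤ 2*k+1 := by nlinarith [hr]
        have hl : -(2*k+1) ≤ 2*r := by nlinarith [hr]
        have hu' : r ≤ k := by omega
        have hl' : -k ≤ r := by omega
        nlinarith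
      have hk3 : (p*q*r)^2 ≤ (k^3)^2 := by
        have h1 : p^2*q^2 ≤ k^2*k^2 := mul_le_mul hp2 hq2 (sq_nonneg q) (by positivity)
        have h2 : (p^2*q^2)*r^2 ≤ (k^2*k^2)*k^2 := mul_le_mul h1 hr2 (sq_nonneg r) (by positivity)
        nlinarith [h2]
      have hpqr : -(k^3) ≤ p*q*r := by
        nlinarith [sq_nonneg (p*q*r + k^3), pow_pos (show (0:ℤ) < k by omega) 3]
      have hs : (2*k+1)*(p^2+q^2+r^2) ≤ (2*k+1)*(3*k^2) := by
        apply mul_le_mul_of_nonneg_left (by linarith) (by omega)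
      linarith [hdet, hpqr, hs, hk1, sq_nonneg k]

lemma gramKey (a b c p q r : ℤ) (ha : 1 ≤ a) (hb : 1 ≤ b) (hc : 1 ≤ c)
    (hpb : 4*p^2 ≤ b^2) (hpc : 4*p^2 ≤ c^2)
    (hqa : 4*q^2 ≤ a^2) (hqc : 4*q^2 ≤ c^2)
    (hra : 4*r^2 ≤ a^2) (hrb : 4*r^2 ≤ b^2)
    (hdet : a*b*c + 2*p*q*r - a*p^2 - b*q^2 - c*r^2 = 1) :
    a = 1 ∧ b = 1 ∧ c = 1 := by
  rcases le_total a b with hab|hab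
  · rcases le_total b c with hbc|hbc
    · exact gramOrd a b c p q r ha hab hbc hpb hqa hra hdet
    · rcases le_total a c with hac|hac
      · -- a ≤ c ≤ b : pairs (a,p),(c,r),(b,q)
        obtain ⟨h1,h2,h3⟩ := gramOrd a c b p r q ha hac hbc hpc hra hqa
          (by linear_combination hdet)
        exact ⟨h1,h3,h2⟩
      · -- c ≤ a ≤ b : (c,r),(a,p),(b,q)
        obtain ⟨h1,h2,h3⟩ := gramOrd c a b r p q hc hac hab hra hpc hqc
          (by linear_combination hdet)
        exact ⟨h2,h3,h1⟩
  · rcases le_total a c with hac|hac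
    · -- b ≤ a ≤ c : (b,q),(a,p),(c,r)
      obtain ⟨h1,h2,h3⟩ := gramOrd b a c q p r hb hab hac hqa hpb hrb
        (by linear_combination hdet)
      exact ⟨h2,h1,h3⟩
    · rcases le_total b c with hbc|hbc
      · -- b ≤ c ≤ a : (b,q),(c,r),(a,p)
        obtain ⟨h1,h2,h3⟩ := gramOrd b c a q r p hb hbc hac hqc hrb hpb
          (by linear_combination hdet)
        exact ⟨h3,h1,h2⟩
      · -- c ≤ b ≤ a : (c,r),(b,q),(a,p)
        obtain ⟨h1,h2,h3⟩ := gramOrd c b a r q p hc hbc hab hrb hqc hpc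
          (by linear_combination hdet)
        exact ⟨h3,h2,h1⟩


lemma unitVec (v : Fin 3 → ℤ) (h : (v 0)^2 + (v 1)^2 + (v 2)^2 = 1) :
    ∃ k : Fin 3, v = Pi.single k 1 ∨ v = -Pi.single k 1 := by
  have b0 : -1 ≤ v 0 ∧ v 0 ≤ 1 := by
    constructor <;> nlinarith [sq_nonneg (v 1), sq_nonneg (v 2)]
  have b1 : -1 ≤ v 1 ∧ v 1 ≤ 1 := by
    constructor <;> nlinarith [sq_nonneg (v 0), sq_nonneg (v 2)]
  have b2 : -1 ≤ v 2 ∧ v 2 ≤ 1 := by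
    constructor <;> nlinarith [sq_nonneg (v 0), sq_nonneg (v 1)]
  have h0 : v 0 = -1 ∨ v 0 = 0 ∨ v 0 = 1 := by omega
  have h1 : v 1 = -1 ∨ v 1 = 0 ∨ v 1 = 1 := by omega
  have h2 : v 2 = -1 ∨ v 2 = 0 ∨ v 2 = 1 := by omega
  rcases h0 with h0|h0|h0 <;> rcases h1 with h1|h1|h1 <;> rcases h2 with h2|h2|h2 <;>
    rw [h0, h1, h2] at h <;>
    first
      | (refine ⟨0, Or.inl ?_⟩; funext i; fin_cases i <;> (simp [h0, h1, h2, Pi.single_apply]; done))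
      | (refine ⟨0, Or.inr ?_⟩; funext i; fin_cases i <;> (simp [h0, h1, h2, Pi.single_apply]; done))
      | (refine ⟨1, Or.inl ?_⟩; funext i; fin_cases i <;> (simp [h0, h1, h2, Pi.single_apply]; done))
      | (refine ⟨1, Or.inr ?_⟩; funext i; fin_cases i <;> (simp [h0, h1, h2, Pi.single_apply]; done))
      | (refine ⟨2, Or.inl ?_⟩; funext i; fin_cases i <;> (simp [h0, h1, h2, Pi.single_apply]; done))
      | (refine ⟨2, Or.inr ?_⟩; funext i; fin_cases i <;> (simp [h0, h1, h2, Pi.single_apply]; done))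
      | (norm_num at h)

lemma vPrec_irrefl (v : Fin 3 → ℤ) : ¬ vPrec v v := by
  rintro (h | ⟨-, i, hi, -⟩)
  · exact lt_irrefl _ h
  · exact lt_irrefl _ hi

lemma vPrec_norm_le (v w : Fin 3 → ℤ) (h : vPrec v w) :
    (v 0)^2 + (v 1)^2 + (v 2)^2 ≤ (w 0)^2 + (w 1)^2 + (w 2)^2 := by
  have h1 : enorm3 v ≤ enorm3 w := by
    rcases h with h | ⟨h, -⟩
    · exact le_of_lt h
    · exact le_of_eq h
  unfold enorm3 at h1
  have hv : (0:ℝ) ≤ ∑ i, ((v i : ℝ))^2 := Finset.sum_nonneg fun i _ => sq_nonneg _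
  have hw : (0:ℝ) ≤ ∑ i, ((w i : ℝ))^2 := Finset.sum_nonneg fun i _ => sq_nonneg _
  have h2 : (∑ i, ((v i : ℝ))^2) ≤ ∑ i, ((w i : ℝ))^2 := by
    nlinarith [Real.sq_sqrt hv, Real.sq_sqrt hw, Real.sqrt_nonneg (∑ i, ((v i : ℝ))^2),
      Real.sqrt_nonneg (∑ i, ((w i : ℝ))^2)]
  rw [Fin.sum_univ_three, Fin.sum_univ_three] at h2
  exact_mod_cast h2

lemma pair_bound (x y : Fin 3 → ℤ) (h : FundamentalPair x y) :
    4*(x 0 * y 0 + x 1 * y 1 + x 2 * y 2)^2 ≤ ((x 0)^2 + (x 1)^2 + (x 2)^2)^2 ∧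
    4*(x 0 * y 0 + x 1 * y 1 + x 2 * y 2)^2 ≤ ((y 0)^2 + (y 1)^2 + (y 2)^2)^2 := by
  obtain ⟨h1, h2, h3, h4⟩ := h
  have e1 := vPrec_norm_le _ _ h1
  have e2 := vPrec_norm_le _ _ h2
  have e3 := vPrec_norm_le _ _ h3
  have e4 := vPrec_norm_le _ _ h4
  simp only [Pi.add_apply, Pi.sub_apply] at e1 e2 e3 e4
  have f1 : 2*(x 0 * y 0 + x 1 * y 1 + x 2 * y 2) ≤ (x 0)^2 + (x 1)^2 + (x 2)^2 := by
    nlinarith [e4]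
  have f2 : -((x 0)^2 + (x 1)^2 + (x 2)^2) ≤ 2*(x 0 * y 0 + x 1 * y 1 + x 2 * y 2) := by
    nlinarith [e2]
  have f3 : 2*(x 0 * y 0 + x 1 * y 1 + x 2 * y 2) ≤ (y 0)^2 + (y 1)^2 + (y 2)^2 := by
    nlinarith [e3]
  have f4 : -((y 0)^2 + (y 1)^2 + (y 2)^2) ≤ 2*(x 0 * y 0 + x 1 * y 1 + x 2 * y 2) := by
    nlinarith [e1]
  constructor
  · nlinarith [mul_nonneg (by linarith : (0:ℤ) ≤ (x 0)^2 + (x 1)^2 + (x 2)^2 - 2*(x 0 * y 0 + x 1 * y 1 + x 2 * y 2)) (by linarith : (0:ℤ) ≤ (x 0)^2 + (x 1)^2 + (x 2)^2 + 2*(x 0 * y 0 + x 1 * y 1 + x 2 * y 2))]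
  · nlinarith [mul_nonneg (by linarith : (0:ℤ) ≤ (y 0)^2 + (y 1)^2 + (y 2)^2 - 2*(x 0 * y 0 + x 1 * y 1 + x 2 * y 2)) (by linarith : (0:ℤ) ≤ (y 0)^2 + (y 1)^2 + (y 2)^2 + 2*(x 0 * y 0 + x 1 * y 1 + x 2 * y 2))]


/-- Main Theorem: if `{v₁, v₂, v₃}` is a `ℤ`-basis of `ℤ³` such that every pair
`{vᵢ, vⱼ}`, `i ≠ j`, is a fundamental pair, then `{v₁, v₂, v₃} ⊆ {±e₁, ±e₂, ±e₃}`. -/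
theorem mainTheorem (v₁ v₂ v₃ : Fin 3 → ℤ) (hb : IsZBasis v₁ v₂ v₃)
    (hfund : ∀ i j : Fin 3, i ≠ j →
      FundamentalPair (![v₁, v₂, v₃] i) (![v₁, v₂, v₃] j)) :
    ∀ i : Fin 3, ∃ k : Fin 3,
      ![v₁, v₂, v₃] i = Pi.single k 1 ∨ ![v₁, v₂, v₃] i = -Pi.single k 1 := by
  have h01 : FundamentalPair v₁ v₂ := by simpa using hfund 0 1 (by decide)
  have h02 : FundamentalPair v₁ v₃ := by simpa using hfund 0 2 (by decide)
  have h12 : FundamentalPair v₂ v₃ := by simpa using hfund 1 2 (by decide)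
  obtain ⟨hr_a, hr_b⟩ := pair_bound _ _ h01
  obtain ⟨hq_a, hq_c⟩ := pair_bound _ _ h02
  obtain ⟨hp_b, hp_c⟩ := pair_bound _ _ h12
  -- determinant
  have hdet2 : ((Matrix.of fun i j => ![v₁, v₂, v₃] j i).det)^2 = 1 := by
    rcases hb with h | h <;> rw [h] <;> ring
  have hgram :
      ((v₁ 0)^2 + (v₁ 1)^2 + (v₁ 2)^2) * ((v₂ 0)^2 + (v₂ 1)^2 + (v₂ 2)^2) * ((v₃ 0)^2 + (v₃ 1)^2 + (v₃ 2)^2)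
      + 2*(v₂ 0 * v₃ 0 + v₂ 1 * v₃ 1 + v₂ 2 * v₃ 2)*(v₁ 0 * v₃ 0 + v₁ 1 * v₃ 1 + v₁ 2 * v₃ 2)*(v₁ 0 * v₂ 0 + v₁ 1 * v₂ 1 + v₁ 2 * v₂ 2)
      - ((v₁ 0)^2 + (v₁ 1)^2 + (v₁ 2)^2) * (v₂ 0 * v₃ 0 + v₂ 1 * v₃ 1 + v₂ 2 * v₃ 2)^2
      - ((v₂ 0)^2 + (v₂ 1)^2 + (v₂ 2)^2) * (v₁ 0 * v₃ 0 + v₁ 1 * v₃ 1 + v₁ 2 * v₃ 2)^2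
      - ((v₃ 0)^2 + (v₃ 1)^2 + (v₃ 2)^2) * (v₁ 0 * v₂ 0 + v₁ 1 * v₂ 1 + v₁ 2 * v₂ 2)^2
      = 1 := by
    rw [← hdet2, Matrix.det_fin_three]
    simp only [Matrix.of_apply, Matrix.cons_val', Matrix.cons_val_zero, Matrix.cons_val_one,
      Matrix.head_cons, Matrix.empty_val', Matrix.cons_val_fin_one, Matrix.head_fin_const,
      Matrix.cons_val_two, Matrix.tail_cons]
    ring
  -- positivity of norms
  have hnz : ∀ (x y : Fin 3 → ℤ), FundamentalPair x y → 1 ≤ (x 0)^2 + (x 1)^2 + (x 2)^2 := by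
    intro x y hxy
    rcases lt_or_ge 0 ((x 0)^2 + (x 1)^2 + (x 2)^2) with h | h
    · omega
    · exfalso
      have h0 : x 0 = 0 := by nlinarith [sq_nonneg (x 0), sq_nonneg (x 1), sq_nonneg (x 2)]
      have h1 : x 1 = 0 := by nlinarith [sq_nonneg (x 0), sq_nonneg (x 1), sq_nonneg (x 2)]
      have h2 : x 2 = 0 := by nlinarith [sq_nonneg (x 0), sq_nonneg (x 1), sq_nonneg (x 2)]
      have hx0 : x = 0 := by funext i; fin_cases i <;> assumption
      have := hxy.2.1
      rw [hx0, zero_add] at this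
      exact vPrec_irrefl _ this
  have ha1 : 1 ≤ (v₁ 0)^2 + (v₁ 1)^2 + (v₁ 2)^2 := hnz _ _ h01
  have hb1 : 1 ≤ (v₂ 0)^2 + (v₂ 1)^2 + (v₂ 2)^2 := hnz _ _ h12
  have hc1 : 1 ≤ (v₃ 0)^2 + (v₃ 1)^2 + (v₃ 2)^2 := by
    have h20 : FundamentalPair v₃ v₁ := by simpa using hfund 2 0 (by decide)
    exact hnz _ _ h20
  obtain ⟨e1, e2, e3⟩ := gramKey _ _ _ _ _ _ ha1 hb1 hc1 hp_b hp_c hq_a hq_c hr_a hr_b hgram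
  intro i
  fin_cases i
  · simpa using unitVec v₁ e1
  · simpa using unitVec v₂ e2
  · simpa using unitVec v₃ e3
end

section
/- Let {v₁, v₂, v₃} be a ℤ-basis of ℤ³ and let Σ = {v₁, v₂, v₃, v₁+v₂, v₁+v₃, v₁+v₂+v₃}. Then Σ consists of six distinct vectors, and no two distinct elements w, w′ of Σ satisfy w ≈ w′; consequently the relation ≺ restricts to a strict total order on Σ, i.e., the six vectors decorating a 0-cell of the well-rounded retract are well ordered with respect to ≺. (Lemma on well-ordering at a 0-cell.) -/
lemma six_distinct : ∀ a b c : Fin 3 → ZMod 2,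
    (Matrix.of fun i j => ![a, b, c] j i).det ≠ 0 →
    [a, b, c, a + b, a + c, a + b + c].Nodup := by decide

lemma vPrec_trans' (a b c : Fin 3 → ℤ) (h1 : vPrec a b) (h2 : vPrec b c) : vPrec a c := by
  rcases h1 with h1 | ⟨he1, i1, hi1, hj1⟩
  · rcases h2 with h2 | ⟨he2, _⟩
    · exact Or.inl (lt_trans h1 h2)
    · exact Or.inl (he2 ▸ h1)
  · rcases h2 with h2 | ⟨he2, i2, hi2, hj2⟩
    · exact Or.inl (he1 ▸ h2)
    · refine Or.inr ⟨he1.trans he2, ?_⟩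
      rcases lt_trichotomy i1 i2 with h | h | h
      · exact ⟨i1, by rw [← hj2 i1 h]; exact hi1,
          fun j hj => (hj1 j hj).trans (hj2 j (hj.trans h))⟩
      · subst h
        exact ⟨i1, lt_trans hi1 hi2, fun j hj => (hj1 j hj).trans (hj2 j hj)⟩
      · exact ⟨i2, by rw [hj1 i2 h]; exact hi2,
          fun j hj => (hj1 j (hj.trans h)).trans (hj2 j hj)⟩

lemma vPrec_asymm' (a b : Fin 3 → ℤ) (h1 : vPrec a b) : ¬ vPrec b a := by
  intro h2
  rcases h1 with h1 | ⟨he1, i1, hi1, hj1⟩ <;> rcases h2 with h2 | ⟨he2, i2, hi2, hj2⟩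
  · exact absurd h1 (not_lt.mpr h2.le)
  · exact absurd h1 (not_lt.mpr he2.le)
  · exact absurd h2 (not_lt.mpr he1.le)
  · rcases lt_trichotomy i1 i2 with h | h | h
    · exact absurd (hj2 i1 h).symm (ne_of_lt hi1)
    · subst h; exact absurd hi2 (not_lt.mpr hi1.le)
    · exact absurd (hj1 i2 h) (ne_of_gt hi2)

lemma vPrec_total' (a b : Fin 3 → ℤ) (h : ¬ vApprox a b) : vPrec a b ∨ vPrec b a := by
  rcases lt_trichotomy (enorm3 a) (enorm3 b) with he | he | he
  · exact Or.inl (Or.inl he)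
  · simp only [vApprox, not_forall] at h
    classical
    set S : Finset (Fin 3) := Finset.univ.filter (fun i => |a i| ≠ |b i|) with hS
    have hne : S.Nonempty := by
      obtain ⟨i, hi⟩ := h; exact ⟨i, by simp [hS, hi]⟩
    set i := S.min' hne with hi
    have hmem : |a i| ≠ |b i| := by
      have := S.min'_mem hne; simp only [hS, Finset.mem_filter] at this; exact this.2
    have hmin : ∀ j, j < i → |a j| = |b j| := by
      intro j hj
      by_contra hc
      have hjS : j ∈ S := by simp [hS, hc]
      exact absurd (S.min'_le j hjS) (not_le.mpr hj)
    rcases lt_or_gt_of_ne hmem with hlt | hgt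
    · exact Or.inl (Or.inr ⟨he, i, hlt, hmin⟩)
    · exact Or.inr (Or.inr ⟨he.symm, i, hgt, fun j hj => (hmin j hj).symm⟩)
  · exact Or.inr (Or.inl he)

lemma key_nodup (v₁ v₂ v₃ : Fin 3 → ℤ) (hb : IsZBasis v₁ v₂ v₃) :
    (List.map (fun (v : Fin 3 → ℤ) (i : Fin 3) => ((v i : ZMod 2)))
      [v₁, v₂, v₃, v₁ + v₂, v₁ + v₃, v₁ + v₂ + v₃]).Nodup := by
  have hadd : ∀ v w : Fin 3 → ℤ,
      (fun i : Fin 3 => (((v + w) i : ℤ) : ZMod 2)) =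
        (fun i : Fin 3 => ((v i : ℤ) : ZMod 2)) + (fun i : Fin 3 => ((w i : ℤ) : ZMod 2)) := by
    intro v w; funext i; simp [Pi.add_apply]
  have hM : (Matrix.of fun i j =>
      ![(fun i : Fin 3 => ((v₁ i : ℤ) : ZMod 2)), (fun i : Fin 3 => ((v₂ i : ℤ) : ZMod 2)),
        (fun i : Fin 3 => ((v₃ i : ℤ) : ZMod 2))] j i) =
      (Int.castRingHom (ZMod 2)).mapMatrix (Matrix.of fun i j => ![v₁, v₂, v₃] j i) := by
    ext i j
    fin_cases j <;> rfl
  have hdet : (Matrix.of fun i j =>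
      ![(fun i : Fin 3 => ((v₁ i : ℤ) : ZMod 2)), (fun i : Fin 3 => ((v₂ i : ℤ) : ZMod 2)),
        (fun i : Fin 3 => ((v₃ i : ℤ) : ZMod 2))] j i).det ≠ 0 := by
    rw [hM, ← RingHom.map_det]
    rcases hb with h | h <;> rw [h] <;> decide
  simp only [List.map, hadd]
  exact six_distinct _ _ _ hdet

/-- Lemma (well-ordering at a 0-cell): for a `ℤ`-basis `{v₁, v₂, v₃}` of `ℤ³`, the six
vectors `Σ = {v₁, v₂, v₃, v₁+v₂, v₁+v₃, v₁+v₂+v₃}` decorating a 0-cell of the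
well-rounded retract are distinct, no two distinct ones are `≈`-equivalent, and hence
`≺` restricts to a strict total order on `Σ`. -/
theorem zeroCellWellOrdered (v₁ v₂ v₃ : Fin 3 → ℤ) (hb : IsZBasis v₁ v₂ v₃) :
    ∀ L : List (Fin 3 → ℤ),
      L = [v₁, v₂, v₃, v₁ + v₂, v₁ + v₃, v₁ + v₂ + v₃] →
      L.Nodup ∧
      (∀ w ∈ L, ∀ w' ∈ L, w ≠ w' → ¬ vApprox w w') ∧
      (∀ w ∈ L, ∀ w' ∈ L, w ≠ w' → (vPrec w w' ↔ ¬ vPrec w' w)) ∧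
      (∀ a ∈ L, ∀ b ∈ L, ∀ c ∈ L, vPrec a b → vPrec b c → vPrec a c) := by
  intro L hL
  have hmap := key_nodup v₁ v₂ v₃ hb
  rw [← hL] at hmap
  have hinj : ∀ w ∈ L, ∀ w' ∈ L, (∀ i, ((w i : ℤ) : ZMod 2) = ((w' i : ℤ) : ZMod 2)) → w = w' :=
    fun w hw w' hw' h => List.inj_on_of_nodup_map hmap hw hw' (funext h)
  have happx : ∀ w ∈ L, ∀ w' ∈ L, w ≠ w' → ¬ vApprox w w' := by
    intro w hw w' hw' hne happ
    apply hne
    apply hinj w hw w' hw'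
    intro i
    rcases abs_eq_abs.mp (happ i) with h | h
    · rw [h]
    · rw [h]; push_cast; exact CharTwo.neg_eq _
  refine ⟨List.Nodup.of_map _ hmap, happx, ?_, ?_⟩
  · intro w hw w' hw' hne
    constructor
    · exact vPrec_asymm' w w'
    · intro h
      exact (vPrec_total' w w' (happx w hw w' hw' hne)).resolve_right h
  · intro a _ b _ c _ h1 h2
    exact vPrec_trans' a b c h1 h2
end

section
/- Let {v₁, v₂, v₃} be a ℤ-basis of ℤ³ and let Σ = {v₁, v₂, v₃, v₁+v₂, v₁+v₃, v₁+v₂+v₃}. For any two distinct subsets A, B ⊆ Σ with |A| = |B|, exactly one of A ≺ B or B ≺ A holds under the induced ordering on finite collections of vectors. (Corollary: all cubes incident at a point are well ordered under the induced ordering.) -/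
/-- `v ⪯ w` : `v ≺ w` or `v ≈ w`. -/
def vPrecEq (v w : Fin 3 → ℤ) : Prop := vPrec v w ∨ vApprox v w

/-- The induced ordering `A ≺ B` on finite collections of vectors, defined recursively:
compare `≺`-minimal elements, and if they are `≈`-equivalent remove them and recurse. -/
inductive CollPrec : Multiset (Fin 3 → ℤ) → Multiset (Fin 3 → ℤ) → Prop
  | strict {A B : Multiset (Fin 3 → ℤ)} {a b : Fin 3 → ℤ}
      (ha : a ∈ A) (hb : b ∈ B)
      (hamin : ∀ x ∈ A, vPrecEq a x) (hbmin : ∀ x ∈ B, vPrecEq b x)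
      (hab : vPrec a b) : CollPrec A B
  | step {A B : Multiset (Fin 3 → ℤ)} {a b : Fin 3 → ℤ}
      (ha : a ∈ A) (hb : b ∈ B)
      (hamin : ∀ x ∈ A, vPrecEq a x) (hbmin : ∀ x ∈ B, vPrecEq b x)
      (hab : vApprox a b) (h : CollPrec (A.erase a) (B.erase b)) : CollPrec A B

/-! ### Auxiliary development -/

/-- The "key" of a vector: squared norm followed by the absolute values of the entries,
ordered lexicographically. -/
noncomputable def key3 (v : Fin 3 → ℤ) : ℤ ×ₗ ℤ ×ₗ ℤ ×ₗ ℤ :=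
  toLex (∑ i, (v i) ^ 2, toLex (|v 0|, toLex (|v 1|, |v 2|)))

lemma enorm3_lt_iff (v w : Fin 3 → ℤ) :
    enorm3 v < enorm3 w ↔ (∑ i, (v i) ^ 2) < ∑ i, (w i) ^ 2 := by
  unfold enorm3
  rw [show (∑ i, ((v i : ℝ)) ^ 2) = (((∑ i, (v i) ^ 2 : ℤ)) : ℝ) by push_cast; ring]
  rw [show (∑ i, ((w i : ℝ)) ^ 2) = (((∑ i, (w i) ^ 2 : ℤ)) : ℝ) by push_cast; ring]
  rw [Real.sqrt_lt_sqrt_iff (by positivity)]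
  exact_mod_cast Iff.rfl

lemma enorm3_eq_iff (v w : Fin 3 → ℤ) :
    enorm3 v = enorm3 w ↔ (∑ i, (v i) ^ 2) = ∑ i, (w i) ^ 2 := by
  constructor
  · intro h
    by_contra hne
    rcases (Ne.lt_or_gt hne) with h' | h'
    · exact lt_irrefl _ (h ▸ (enorm3_lt_iff v w).mpr h')
    · exact lt_irrefl _ (h ▸ (enorm3_lt_iff w v).mpr h')
  · intro h
    unfold enorm3
    congr 1
    exact_mod_cast congrArg (fun z : ℤ => (z : ℝ)) h

lemma key3_lt_iff (v w : Fin 3 → ℤ) : vPrec v w ↔ key3 v < key3 w := by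
  unfold vPrec key3
  simp only [Prod.Lex.lt_iff]
  rw [enorm3_lt_iff, enorm3_eq_iff]
  constructor
  · rintro (h | ⟨heq, i, hi, hj⟩)
    · exact Or.inl h
    · refine Or.inr ⟨heq, ?_⟩
      fin_cases i
      · exact Or.inl hi
      · exact Or.inr ⟨hj 0 (by decide), Or.inl hi⟩
      · exact Or.inr ⟨hj 0 (by decide), Or.inr ⟨hj 1 (by decide), hi⟩⟩
  · rintro (h | ⟨heq, h | ⟨h0, h | ⟨h1, h2⟩⟩⟩)
    · exact Or.inl h
    · refine Or.inr ⟨heq, 0, h, ?_⟩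
      intro j hj
      exact absurd hj (by simp [Fin.lt_def])
    · refine Or.inr ⟨heq, 1, h, ?_⟩
      intro j hj
      fin_cases j
      · exact h0
      · exact absurd hj (by decide)
      · exact absurd hj (by decide)
    · refine Or.inr ⟨heq, 2, h2, ?_⟩
      intro j hj
      fin_cases j
      · exact h0
      · exact h1
      · exact absurd hj (by decide)

lemma key3_eq_iff (v w : Fin 3 → ℤ) : vApprox v w ↔ key3 v = key3 w := by
  unfold vApprox key3
  constructor
  · intro h
    have hq : (∑ i, (v i) ^ 2) = ∑ i, (w i) ^ 2 := by
      refine Finset.sum_congr rfl fun i _ => ?_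
      rw [← sq_abs (v i), ← sq_abs (w i), h i]
    simp [hq, h 0, h 1, h 2]
  · intro h
    simp only [toLex_inj, Prod.mk.injEq] at h
    intro i
    fin_cases i
    · exact h.2.1
    · exact h.2.2.1
    · exact h.2.2.2

lemma key3_le_iff (v w : Fin 3 → ℤ) : vPrecEq v w ↔ key3 v ≤ key3 w := by
  rw [le_iff_lt_or_eq, vPrecEq, key3_lt_iff, key3_eq_iff]

lemma sort_cons_min {α : Type*} [LinearOrder α] (x : α) (s : Multiset α)
    (hx : ∀ y ∈ s, x ≤ y) :
    (x ::ₘ s).sort (· ≤ ·) = x :: s.sort (· ≤ ·) := by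
  have hperm : ((x ::ₘ s).sort (· ≤ ·)).Perm (x :: s.sort (· ≤ ·)) := by
    apply Multiset.coe_eq_coe.mp
    rw [Multiset.sort_eq, ← Multiset.cons_coe, Multiset.sort_eq]
  have h2 : List.Pairwise (· ≤ ·) (x :: s.sort (· ≤ ·)) := by
    rw [List.pairwise_cons]
    exact ⟨fun y hy => hx y ((Multiset.mem_sort _).mp hy), Multiset.pairwise_sort _ _⟩
  exact hperm.eq_of_pairwise' (Multiset.pairwise_sort _ _) h2

/-- Sorted list of keys of a multiset of vectors. -/
noncomputable def sK (A : Multiset (Fin 3 → ℤ)) : List (ℤ ×ₗ ℤ ×ₗ ℤ ×ₗ ℤ) :=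
  (A.map key3).sort (· ≤ ·)

lemma sK_cons {A : Multiset (Fin 3 → ℤ)} {a : Fin 3 → ℤ} (ha : a ∈ A)
    (hmin : ∀ x ∈ A, vPrecEq a x) : sK A = key3 a :: sK (A.erase a) := by
  unfold sK
  conv_lhs => rw [← Multiset.cons_erase ha]
  rw [Multiset.map_cons]
  apply sort_cons_min
  intro y hy
  obtain ⟨x, hx, rfl⟩ := Multiset.mem_map.mp hy
  exact (key3_le_iff a x).mp (hmin x (Multiset.mem_of_mem_erase hx))

lemma collPrec_sound {A B : Multiset (Fin 3 → ℤ)} (h : CollPrec A B) :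
    List.Lex (· < ·) (sK A) (sK B) := by
  induction h with
  | strict ha hb hamin hbmin hab =>
      rw [sK_cons ha hamin, sK_cons hb hbmin]
      exact List.Lex.rel ((key3_lt_iff _ _).mp hab)
  | step ha hb hamin hbmin hab h ih =>
      rw [sK_cons ha hamin, sK_cons hb hbmin, (key3_eq_iff _ _).mp hab]
      exact List.Lex.cons ih

lemma lex_asymm {α : Type*} [LinearOrder α] :
    ∀ {l₁ l₂ : List α}, List.Lex (· < ·) l₁ l₂ → List.Lex (· < ·) l₂ l₁ → False := by
  intro l₁ l₂ h₁
  induction h₁ with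
  | nil => intro h₂; cases h₂
  | @cons a l₁ l₂ h ih =>
      intro h₂
      cases h₂ with
      | cons h' => exact ih h'
      | rel h' => exact lt_irrefl _ h'
  | @rel a l₁ b l₂ h =>
      intro h₂
      cases h₂ with
      | cons h' => exact lt_irrefl _ h
      | rel h' => exact lt_asymm h h'

lemma exmin : ∀ (A : Multiset (Fin 3 → ℤ)), A ≠ 0 →
    ∃ a, a ∈ A ∧ ∀ x ∈ A, vPrecEq a x := by
  intro A
  induction A using Multiset.induction_on with
  | empty => intro h; exact absurd rfl h
  | cons a s ih =>
      intro _
      by_cases hs : s = 0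
      · subst hs
        refine ⟨a, Multiset.mem_cons_self a 0, ?_⟩
        intro x hx
        rcases Multiset.mem_cons.mp hx with rfl | hx
        · exact (key3_le_iff x x).mpr le_rfl
        · simp at hx
      · obtain ⟨m, hm, hmin⟩ := ih hs
        by_cases hle : key3 a ≤ key3 m
        · refine ⟨a, Multiset.mem_cons_self a s, ?_⟩
          intro x hx
          rcases Multiset.mem_cons.mp hx with rfl | hx
          · exact (key3_le_iff x x).mpr le_rfl
          · exact (key3_le_iff a x).mpr
              (le_trans hle ((key3_le_iff m x).mp (hmin x hx)))
        · refine ⟨m, Multiset.mem_cons_of_mem hm, ?_⟩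
          intro x hx
          rcases Multiset.mem_cons.mp hx with rfl | hx
          · exact (key3_le_iff m x).mpr (le_of_not_ge hle)
          · exact hmin x hx

lemma collPrec_total : ∀ (n : ℕ) (A B : Multiset (Fin 3 → ℤ)),
    Multiset.card A = n → Multiset.card B = n →
    CollPrec A B ∨ CollPrec B A ∨ A.map key3 = B.map key3 := by
  intro n
  induction n with
  | zero =>
      intro A B hA hB
      rw [Multiset.card_eq_zero] at hA hB
      subst hA; subst hB
      exact Or.inr (Or.inr rfl)
  | succ n ih =>
      intro A B hA hB
      have hA0 : A ≠ 0 := by intro h; subst h; simp at hA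
      have hB0 : B ≠ 0 := by intro h; subst h; simp at hB
      obtain ⟨a, ha, hamin⟩ := exmin A hA0
      obtain ⟨b, hb, hbmin⟩ := exmin B hB0
      rcases lt_trichotomy (key3 a) (key3 b) with h | h | h
      · exact Or.inl (CollPrec.strict ha hb hamin hbmin ((key3_lt_iff a b).mpr h))
      · have hA' : Multiset.card (A.erase a) = n := by
          rw [Multiset.card_erase_of_mem ha, hA]; rfl
        have hB' : Multiset.card (B.erase b) = n := by
          rw [Multiset.card_erase_of_mem hb, hB]; rfl
        rcases ih (A.erase a) (B.erase b) hA' hB' with h' | h' | h'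
        · exact Or.inl (CollPrec.step ha hb hamin hbmin ((key3_eq_iff a b).mpr h) h')
        · exact Or.inr (Or.inl
            (CollPrec.step hb ha hbmin hamin ((key3_eq_iff b a).mpr h.symm) h'))
        · refine Or.inr (Or.inr ?_)
          rw [← Multiset.cons_erase ha, ← Multiset.cons_erase hb,
            Multiset.map_cons, Multiset.map_cons, h', h]
      · exact Or.inr (Or.inl (CollPrec.strict hb ha hbmin hamin ((key3_lt_iff b a).mpr h)))

lemma dvd_coef_of_dvd_mulVec (M : Matrix (Fin 3) (Fin 3) ℤ) (hdet : IsUnit M.det)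
    (c : Fin 3 → ℤ) (h : ∀ i, (2 : ℤ) ∣ M.mulVec c i) : ∀ j, (2 : ℤ) ∣ c j := by
  intro j
  have hc : c = M⁻¹.mulVec (M.mulVec c) := by
    rw [Matrix.mulVec_mulVec, Matrix.nonsing_inv_mul M hdet, Matrix.one_mulVec]
  rw [hc]
  simp only [Matrix.mulVec, dotProduct]
  exact Finset.dvd_sum fun i _ => (h i).mul_left _

lemma mulVec01_inj (M : Matrix (Fin 3) (Fin 3) ℤ) (hdet : IsUnit M.det)
    (p q : Fin 3 → ℤ) (hp : ∀ j, p j = 0 ∨ p j = 1) (hq : ∀ j, q j = 0 ∨ q j = 1)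
    (h : vApprox (M.mulVec p) (M.mulVec q)) : p = q := by
  have h2 : ∀ i, (2 : ℤ) ∣ M.mulVec (p - q) i := by
    intro i
    rw [Matrix.mulVec_sub, Pi.sub_apply]
    rcases abs_eq_abs.mp (h i) with he | he <;> rw [he] <;> ring_nf <;> omega
  have h3 := dvd_coef_of_dvd_mulVec M hdet _ h2
  funext j
  have := h3 j
  rw [Pi.sub_apply] at this
  rcases hp j with e | e <;> rcases hq j with f | f <;> omega

/-- Corollary: for a `ℤ`-basis `{v₁, v₂, v₃}` of `ℤ³` and
`Σ = {v₁, v₂, v₃, v₁+v₂, v₁+v₃, v₁+v₂+v₃}`, any two distinct equal-sized subsets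
`A, B ⊆ Σ` satisfy exactly one of `A ≺ B`, `B ≺ A` under the induced ordering. -/
theorem cubesWellOrdered (v₁ v₂ v₃ : Fin 3 → ℤ) (hb : IsZBasis v₁ v₂ v₃)
    (S : Finset (Fin 3 → ℤ))
    (hS : S = {v₁, v₂, v₃, v₁ + v₂, v₁ + v₃, v₁ + v₂ + v₃})
    (A B : Finset (Fin 3 → ℤ)) (hA : A ⊆ S) (hB : B ⊆ S)
    (hcard : A.card = B.card) (hne : A ≠ B) :
    Xor' (CollPrec A.val B.val) (CollPrec B.val A.val) := by
  set M : Matrix (Fin 3) (Fin 3) ℤ := Matrix.of fun i j => ![v₁, v₂, v₃] j i with hM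
  have hdet : IsUnit M.det := Int.isUnit_iff.mpr hb
  have hform : ∀ x ∈ S, ∃ p : Fin 3 → ℤ,
      (∀ j, p j = 0 ∨ p j = 1) ∧ x = M.mulVec p := by
    intro x hx
    rw [hS] at hx
    simp only [Finset.mem_insert, Finset.mem_singleton] at hx
    rcases hx with rfl | rfl | rfl | rfl | rfl | rfl
    · exact ⟨![1, 0, 0], by decide, by
        funext i; simp [hM, Matrix.mulVec, dotProduct, Fin.sum_univ_three]⟩
    · exact ⟨![0, 1, 0], by decide, by
        funext i; simp [hM, Matrix.mulVec, dotProduct, Fin.sum_univ_three]⟩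
    · exact ⟨![0, 0, 1], by decide, by
        funext i; simp [hM, Matrix.mulVec, dotProduct, Fin.sum_univ_three]⟩
    · exact ⟨![1, 1, 0], by decide, by
        funext i; simp [hM, Matrix.mulVec, dotProduct, Fin.sum_univ_three]⟩
    · exact ⟨![1, 0, 1], by decide, by
        funext i; simp [hM, Matrix.mulVec, dotProduct, Fin.sum_univ_three]⟩
    · exact ⟨![1, 1, 1], by decide, by
        funext i; simp [hM, Matrix.mulVec, dotProduct, Fin.sum_univ_three]⟩
  have hkeyinj : ∀ x ∈ S, ∀ y ∈ S, key3 x = key3 y → x = y := by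
    intro x hx y hy hk
    obtain ⟨p, hp, rfl⟩ := hform x hx
    obtain ⟨q, hq, rfl⟩ := hform y hy
    rw [mulVec01_inj M hdet p q hp hq ((key3_eq_iff _ _).mpr hk)]
  have hABeq : A.val.map key3 = B.val.map key3 → A = B := by
    intro hmap
    apply Finset.ext
    intro x
    constructor
    · intro hx
      have hxk : key3 x ∈ B.val.map key3 := by
        rw [← hmap]; exact Multiset.mem_map_of_mem _ hx
      obtain ⟨y, hy, hk⟩ := Multiset.mem_map.mp hxk
      have hyx : y = x := hkeyinj y (hB hy) x (hA hx) hk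
      rwa [hyx] at hy
    · intro hx
      have hxk : key3 x ∈ A.val.map key3 := by
        rw [hmap]; exact Multiset.mem_map_of_mem _ hx
      obtain ⟨y, hy, hk⟩ := Multiset.mem_map.mp hxk
      have hyx : y = x := hkeyinj y (hA hy) x (hB hx) hk
      rwa [hyx] at hy
  rcases collPrec_total A.card A.val B.val rfl hcard.symm with h | h | h
  · exact Or.inl ⟨h, fun h' => lex_asymm (collPrec_sound h) (collPrec_sound h')⟩
  · exact Or.inr ⟨h, fun h' => lex_asymm (collPrec_sound h') (collPrec_sound h)⟩
  · exact absurd (hABeq h) hne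
end

section
/- Let v₁, v₂, v₃ ∈ ℝ^m be nonzero vectors such that ‖v_i + v_j‖ ≤ max{‖v_i‖, ‖v_j‖} for all 1 ≤ i < j ≤ 3. Then ‖v₁ + v₂ + v₃‖ < max{‖v₁‖, ‖v₂‖, ‖v₃‖}. (Lemma ConnectedTwo.) -/
/-- Lemma (ConnectedTwo): if `v₁, v₂, v₃ ∈ ℝ^m` are nonzero with
`‖v_i + v_j‖ ≤ max ‖v_i‖ ‖v_j‖` for all `1 ≤ i < j ≤ 3`, then
`‖v₁ + v₂ + v₃‖ < max {‖v₁‖, ‖v₂‖, ‖v₃‖}`. -/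
theorem connectedTwo (m : ℕ) (v₁ v₂ v₃ : EuclideanSpace ℝ (Fin m))
    (h₁ : v₁ ≠ 0) (h₂ : v₂ ≠ 0) (h₃ : v₃ ≠ 0)
    (h12 : ‖v₁ + v₂‖ ≤ max ‖v₁‖ ‖v₂‖)
    (h13 : ‖v₁ + v₃‖ ≤ max ‖v₁‖ ‖v₃‖)
    (h23 : ‖v₂ + v₃‖ ≤ max ‖v₂‖ ‖v₃‖) :
    ‖v₁ + v₂ + v₃‖ < max ‖v₁‖ (max ‖v₂‖ ‖v₃‖) := by
  have n1 : (0:ℝ) < ‖v₁‖ := norm_pos_iff.mpr h₁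
  have n2 : (0:ℝ) < ‖v₂‖ := norm_pos_iff.mpr h₂
  have n3 : (0:ℝ) < ‖v₃‖ := norm_pos_iff.mpr h₃
  have p1 : (0:ℝ) < ‖v₁‖^2 := pow_pos n1 2
  have p2 : (0:ℝ) < ‖v₂‖^2 := pow_pos n2 2
  have p3 : (0:ℝ) < ‖v₃‖^2 := pow_pos n3 2
  have e12 : ‖v₁ + v₂‖^2 = ‖v₁‖^2 + 2 * inner ℝ v₁ v₂ + ‖v₂‖^2 := norm_add_sq_real v₁ v₂
  have e13 : ‖v₁ + v₃‖^2 = ‖v₁‖^2 + 2 * inner ℝ v₁ v₃ + ‖v₃‖^2 := norm_add_sq_real v₁ v₃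
  have e23 : ‖v₂ + v₃‖^2 = ‖v₂‖^2 + 2 * inner ℝ v₂ v₃ + ‖v₃‖^2 := norm_add_sq_real v₂ v₃
  have eS : ‖v₁ + v₂ + v₃‖^2 = ‖v₁‖^2 + ‖v₂‖^2 + ‖v₃‖^2
      + 2 * inner ℝ v₁ v₂ + 2 * inner ℝ v₁ v₃ + 2 * inner ℝ v₂ v₃ := by
    rw [norm_add_sq_real, norm_add_sq_real, inner_add_left]; ring
  have sq12 : ‖v₁ + v₂‖^2 ≤ (max ‖v₁‖ ‖v₂‖)^2 := pow_le_pow_left₀ (norm_nonneg _) h12 2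
  have sq13 : ‖v₁ + v₃‖^2 ≤ (max ‖v₁‖ ‖v₃‖)^2 := pow_le_pow_left₀ (norm_nonneg _) h13 2
  have sq23 : ‖v₂ + v₃‖^2 ≤ (max ‖v₂‖ ‖v₃‖)^2 := pow_le_pow_left₀ (norm_nonneg _) h23 2
  rw [e12] at sq12
  rw [e13] at sq13
  rw [e23] at sq23
  have k12 : 2 * inner ℝ v₁ v₂ ≤ -(min ‖v₁‖ ‖v₂‖)^2 := by
    rcases max_cases ‖v₁‖ ‖v₂‖ with ⟨e, l⟩ | ⟨e, l⟩ <;> rw [e] at sq12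
    · rw [min_eq_right l]; linarith
    · rw [min_eq_left l.le]; linarith
  have k13 : 2 * inner ℝ v₁ v₃ ≤ -(min ‖v₁‖ ‖v₃‖)^2 := by
    rcases max_cases ‖v₁‖ ‖v₃‖ with ⟨e, l⟩ | ⟨e, l⟩ <;> rw [e] at sq13
    · rw [min_eq_right l]; linarith
    · rw [min_eq_left l.le]; linarith
  have k23 : 2 * inner ℝ v₂ v₃ ≤ -(min ‖v₂‖ ‖v₃‖)^2 := by
    rcases max_cases ‖v₂‖ ‖v₃‖ with ⟨e, l⟩ | ⟨e, l⟩ <;> rw [e] at sq23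
    · rw [min_eq_right l]; linarith
    · rw [min_eq_left l.le]; linarith
  have hM : (0:ℝ) ≤ max ‖v₁‖ (max ‖v₂‖ ‖v₃‖) := le_max_of_le_left n1.le
  have M1 : ‖v₁‖^2 ≤ (max ‖v₁‖ (max ‖v₂‖ ‖v₃‖))^2 :=
    pow_le_pow_left₀ n1.le (le_max_left _ _) 2
  have M2 : ‖v₂‖^2 ≤ (max ‖v₁‖ (max ‖v₂‖ ‖v₃‖))^2 :=
    pow_le_pow_left₀ n2.le (le_max_of_le_right (le_max_left _ _)) 2
  have M3 : ‖v₃‖^2 ≤ (max ‖v₁‖ (max ‖v₂‖ ‖v₃‖))^2 :=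
    pow_le_pow_left₀ n3.le (le_max_of_le_right (le_max_right _ _)) 2
  apply lt_of_pow_lt_pow_left₀ 2 hM
  rcases min_cases ‖v₁‖ ‖v₂‖ with ⟨ea, la⟩ | ⟨ea, la⟩ <;> rw [ea] at k12 <;>
  rcases min_cases ‖v₁‖ ‖v₃‖ with ⟨eb, lb⟩ | ⟨eb, lb⟩ <;> rw [eb] at k13 <;>
  rcases min_cases ‖v₂‖ ‖v₃‖ with ⟨ec, lc⟩ | ⟨ec, lc⟩ <;> rw [ec] at k23 <;>
  linarith [eS, k12, k13, k23, M1, M2, M3, p1, p2, p3]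
end

section
/- Let g ∈ SL₂(ℤ) have columns v₁, v₂ ∈ ℤ². Assume that, as unordered pairs of integer vectors taken up to sign, {v₁, v₂} is none of the five pairs {e₁, e₂}, {e₁, e₁+e₂}, {e₂, e₁+e₂}, {e₁, e₁−e₂}, {e₂, e₁−e₂} (i.e., g neither stabilizes the fundamental arc of the well-rounded retract in the upper half-plane nor maps it to one of its neighboring arcs). Then: (1) the three norms ‖v₁‖, ‖v₂‖, ‖v₁+v₂‖ are pairwise distinct, and the three norms ‖v₁‖, ‖v₂‖, ‖v₁−v₂‖ are pairwise distinct (so each of the sets {v₁, v₂, v₁+v₂} and {v₁, v₂, v₁−v₂} is totally ordered by Euclidean norm); and (2) min{‖v₁+v₂‖, ‖v₁−v₂‖} < max{‖v₁‖, ‖v₂‖}. (Lemma NormRankOne.) -/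
/-- The Euclidean norm of an integer vector in `ℤ²`, regarded as a vector in `ℝ²`. -/
noncomputable def enorm2 (v : Fin 2 → ℤ) : ℝ :=
  Real.sqrt (∑ i, ((v i : ℝ)) ^ 2)

/-- The unordered pairs `{a, b}` and `{c, d}` of integer vectors coincide up to sign. -/
def PairEquivUpToSign (a b c d : Fin 2 → ℤ) : Prop :=
  ((a = c ∨ a = -c) ∧ (b = d ∨ b = -d)) ∨ ((a = d ∨ a = -d) ∧ (b = c ∨ b = -c))

def IntPair (a b c d p q r s : ℤ) : Prop :=
  ((a = p ∧ b = q ∨ a = -p ∧ b = -q) ∧ (c = r ∧ d = s ∨ c = -r ∧ d = -s)) ∨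
  ((a = r ∧ b = s ∨ a = -r ∧ b = -s) ∧ (c = p ∧ d = q ∨ c = -p ∧ d = -q))

lemma pairEquiv_iff (v w : Fin 2 → ℤ) (p q r s : ℤ) :
    PairEquivUpToSign v w ![p,q] ![r,s] ↔ IntPair (v 0) (v 1) (w 0) (w 1) p q r s := by
  unfold PairEquivUpToSign IntPair
  simp [funext_iff, Fin.forall_fin_two]

lemma branch (N1 N2 S : ℤ) (hkey : 1 + S^2 = N1*N2) (hN1 : 0 ≤ N1) (hN2 : 0 ≤ N2)
    (hB : N2 + 2*S = 0) : S = -1 ∧ N1 = 1 ∧ N2 = 2 := by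
  have h1 : 1 ≤ N2 := by nlinarith
  have hs : S ≤ -1 := by omega
  have hd : S ∣ 1 := ⟨-2*N1 - S, by linear_combination hkey + N1 * hB⟩
  have := Int.isUnit_iff.mp (isUnit_of_dvd_one hd)
  have hS : S = -1 := by omega
  subst hS
  constructor
  · rfl
  have hN2' : N2 = 2 := by omega
  refine ⟨by nlinarith, hN2'⟩

lemma enorm2_eq_iff (v w : Fin 2 → ℤ) :
    enorm2 v = enorm2 w ↔ (v 0)^2 + (v 1)^2 = (w 0)^2 + (w 1)^2 := by
  unfold enorm2
  rw [Fin.sum_univ_two, Fin.sum_univ_two,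
    show ((v 0 : ℝ)^2 + (v 1 : ℝ)^2) = (((v 0)^2 + (v 1)^2 : ℤ) : ℝ) by push_cast; ring,
    show ((w 0 : ℝ)^2 + (w 1 : ℝ)^2) = (((w 0)^2 + (w 1)^2 : ℤ) : ℝ) by push_cast; ring,
    Real.sqrt_inj (by positivity) (by positivity), Int.cast_inj]

lemma enorm2_lt (v w : Fin 2 → ℤ) (h : (v 0)^2 + (v 1)^2 < (w 0)^2 + (w 1)^2) :
    enorm2 v < enorm2 w := by
  unfold enorm2
  rw [Fin.sum_univ_two, Fin.sum_univ_two]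
  apply Real.sqrt_lt_sqrt (by positivity)
  exact_mod_cast h
lemma sq_one (a b : ℤ) (h : a^2 + b^2 = 1) :
    (a = 1 ∧ b = 0) ∨ (a = -1 ∧ b = 0) ∨ (a = 0 ∧ b = 1) ∨ (a = 0 ∧ b = -1) := by
  have ha1 : -1 ≤ a := by nlinarith [sq_nonneg (a+1), sq_nonneg b]
  have ha2 : a ≤ 1 := by nlinarith [sq_nonneg (a-1), sq_nonneg b]
  have hb1 : -1 ≤ b := by nlinarith [sq_nonneg (b+1), sq_nonneg a]
  have hb2 : b ≤ 1 := by nlinarith [sq_nonneg (b-1), sq_nonneg a]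
  interval_cases a <;> interval_cases b <;> omega

lemma sq_two (a b : ℤ) (h : a^2 + b^2 = 2) :
    (a = 1 ∨ a = -1) ∧ (b = 1 ∨ b = -1) := by
  have ha1 : -1 ≤ a := by nlinarith [sq_nonneg (a+1), sq_nonneg b]
  have ha2 : a ≤ 1 := by nlinarith [sq_nonneg (a-1), sq_nonneg b]
  have hb1 : -1 ≤ b := by nlinarith [sq_nonneg (b+1), sq_nonneg a]
  have hb2 : b ≤ 1 := by nlinarith [sq_nonneg (b-1), sq_nonneg a]
  interval_cases a <;> interval_cases b <;> omega
lemma caseOneTwo (a b c d : ℤ)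
    (H2 : ¬ IntPair a b c d 1 0 1 1) (H3 : ¬ IntPair a b c d 0 1 1 1)
    (H4 : ¬ IntPair a b c d 1 0 1 (-1)) (H5 : ¬ IntPair a b c d 0 1 1 (-1))
    (hN1 : a^2 + b^2 = 1) (hN2 : c^2 + d^2 = 2) : False := by
  unfold IntPair at H2 H3 H4 H5
  have h1 := sq_two c d hN2
  have h2 := sq_one a b hN1
  obtain ⟨hc | hc, hd | hd⟩ := h1 <;> subst hc hd <;>
    rcases h2 with ⟨ha, hb⟩ | ⟨ha, hb⟩ | ⟨ha, hb⟩ | ⟨ha, hb⟩ <;> subst ha hb <;>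
    (revert H2 H3 H4 H5; norm_num)

lemma IntPair_swap {a b c d p q r s : ℤ} (h : IntPair c d a b p q r s) :
    IntPair a b c d p q r s := by
  unfold IntPair at *; tauto

lemma caseOneOne (a b c d : ℤ) (hdet : a*d - b*c = 1)
    (H1 : ¬ IntPair a b c d 1 0 0 1)
    (hN1 : a^2 + b^2 = 1) (hN2 : c^2 + d^2 = 1) : False := by
  unfold IntPair at H1
  have h3 := sq_one c d hN2
  rcases sq_one a b hN1 with ⟨ha, hb⟩ | ⟨ha, hb⟩ | ⟨ha, hb⟩ | ⟨ha, hb⟩ <;> subst ha hb <;>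
    rcases h3 with ⟨hc, hd⟩ | ⟨hc, hd⟩ | ⟨hc, hd⟩ | ⟨hc, hd⟩ <;> subst hc hd <;>
    (revert H1 hdet; norm_num)

lemma keyInt (a b c d : ℤ) (hdet : a*d - b*c = 1)
    (H1 : ¬ IntPair a b c d 1 0 0 1) (H2 : ¬ IntPair a b c d 1 0 1 1)
    (H3 : ¬ IntPair a b c d 0 1 1 1) (H4 : ¬ IntPair a b c d 1 0 1 (-1))
    (H5 : ¬ IntPair a b c d 0 1 1 (-1)) :
    a^2+b^2 ≠ c^2+d^2 ∧ a^2+b^2 ≠ (a+c)^2+(b+d)^2 ∧ c^2+d^2 ≠ (a+c)^2+(b+d)^2 ∧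
    a^2+b^2 ≠ (a-c)^2+(b-d)^2 ∧ c^2+d^2 ≠ (a-c)^2+(b-d)^2 ∧
    min ((a+c)^2+(b+d)^2) ((a-c)^2+(b-d)^2) < max (a^2+b^2) (c^2+d^2) := by
  have hkey : 1 + (a*c + b*d)^2 = (a^2+b^2) * (c^2+d^2) := by
    linear_combination (-(a*d - b*c + 1)) * hdet
  have hN1 : (0:ℤ) ≤ a^2+b^2 := by positivity
  have hN2 : (0:ℤ) ≤ c^2+d^2 := by positivity
  have H2' : ¬ IntPair c d a b 1 0 1 1 := fun h => H2 (IntPair_swap h)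
  have H3' : ¬ IntPair c d a b 0 1 1 1 := fun h => H3 (IntPair_swap h)
  have H4' : ¬ IntPair c d a b 1 0 1 (-1) := fun h => H4 (IntPair_swap h)
  have H5' : ¬ IntPair c d a b 0 1 1 (-1) := fun h => H5 (IntPair_swap h)
  refine ⟨?_, ?_, ?_, ?_, ?_, ?_⟩
  · -- N1 ≠ N2
    intro hE
    have hprod : ((a^2+b^2) - (a*c+b*d)) * ((a^2+b^2) + (a*c+b*d)) = 1 := by
      linear_combination -hkey + (a^2+b^2) * hE
    rcases Int.mul_eq_one_iff_eq_one_or_neg_one.mp hprod with ⟨u, v⟩ | ⟨u, v⟩ <;>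
    · have hn1 : a^2+b^2 = 1 := by linarith
      exact caseOneOne a b c d hdet H1 hn1 (by rw [← hE]; exact hn1)
  · -- N1 ≠ N+
    intro hE
    have hB : (c^2+d^2) + 2*(a*c+b*d) = 0 := by linear_combination -hE
    obtain ⟨_, h1, h2⟩ := branch _ _ _ hkey hN1 hN2 hB
    exact caseOneTwo a b c d H2 H3 H4 H5 h1 h2
  · -- N2 ≠ N+
    intro hE
    have hB : (a^2+b^2) + 2*(a*c+b*d) = 0 := by linear_combination -hE
    have hkey' : 1 + (a*c+b*d)^2 = (c^2+d^2) * (a^2+b^2) := by linear_combination hkey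
    obtain ⟨_, h1, h2⟩ := branch _ _ _ hkey' hN2 hN1 hB
    exact caseOneTwo c d a b H2' H3' H4' H5' h1 h2
  · -- N1 ≠ N-
    intro hE
    have hB : (c^2+d^2) + 2*(-(a*c+b*d)) = 0 := by linear_combination -hE
    have hkey' : 1 + (-(a*c+b*d))^2 = (a^2+b^2) * (c^2+d^2) := by linear_combination hkey
    obtain ⟨_, h1, h2⟩ := branch _ _ _ hkey' hN1 hN2 hB
    exact caseOneTwo a b c d H2 H3 H4 H5 h1 h2
  · -- N2 ≠ N-
    intro hE
    have hB : (a^2+b^2) + 2*(-(a*c+b*d)) = 0 := by linear_combination -hE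
    have hkey' : 1 + (-(a*c+b*d))^2 = (c^2+d^2) * (a^2+b^2) := by linear_combination hkey
    obtain ⟨_, h1, h2⟩ := branch _ _ _ hkey' hN2 hN1 hB
    exact caseOneTwo c d a b H2' H3' H4' H5' h1 h2
  · -- min < max
    by_contra hcon
    rw [not_lt, max_le_iff, le_min_iff, le_min_iff] at hcon
    obtain ⟨⟨q1, q2⟩, q3, q4⟩ := hcon
    set S := a*c + b*d with hS
    have p1 : 0 ≤ (c^2+d^2) + 2*S := by nlinarith
    have p2 : 0 ≤ (c^2+d^2) - 2*S := by nlinarith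
    have p3 : 0 ≤ (a^2+b^2) + 2*S := by nlinarith
    have p4 : 0 ≤ (a^2+b^2) - 2*S := by nlinarith
    rcases eq_or_ne S 0 with hs0 | hs0
    · rw [hs0] at hkey
      have hm : (a^2+b^2) * (c^2+d^2) = 1 := by linarith [hkey]
      rcases Int.mul_eq_one_iff_eq_one_or_neg_one.mp hm with ⟨u, v⟩ | ⟨u, v⟩
      · exact caseOneOne a b c d hdet H1 u v
      · omega
    · have h1S : 1 ≤ S^2 := by rcases hs0.lt_or_gt with h | h <;> nlinarith
      nlinarith [mul_nonneg p4 p1, mul_nonneg p3 p2]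
/-- Lemma (NormRankOne): let `g ∈ SL₂(ℤ)` have columns `v₁, v₂`.  If, as an unordered
pair up to sign, `{v₁, v₂}` is none of `{e₁, e₂}`, `{e₁, e₁+e₂}`, `{e₂, e₁+e₂}`,
`{e₁, e₁-e₂}`, `{e₂, e₁-e₂}`, then the sets `{v₁, v₂, v₁+v₂}` and `{v₁, v₂, v₁-v₂}` are
totally ordered by Euclidean norm, and `min ‖v₁ ± v₂‖ < max ‖v₁‖ ‖v₂‖`. -/
theorem normRankOne (g : Matrix (Fin 2) (Fin 2) ℤ) (hg : g.det = 1)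
    (v₁ v₂ : Fin 2 → ℤ) (hv₁ : v₁ = fun i => g i 0) (hv₂ : v₂ = fun i => g i 1)
    (e₁ e₂ : Fin 2 → ℤ) (he₁ : e₁ = ![1, 0]) (he₂ : e₂ = ![0, 1])
    (h1 : ¬ PairEquivUpToSign v₁ v₂ e₁ e₂)
    (h2 : ¬ PairEquivUpToSign v₁ v₂ e₁ (e₁ + e₂))
    (h3 : ¬ PairEquivUpToSign v₁ v₂ e₂ (e₁ + e₂))
    (h4 : ¬ PairEquivUpToSign v₁ v₂ e₁ (e₁ - e₂))
    (h5 : ¬ PairEquivUpToSign v₁ v₂ e₂ (e₁ - e₂)) :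
    (enorm2 v₁ ≠ enorm2 v₂ ∧ enorm2 v₁ ≠ enorm2 (v₁ + v₂) ∧
        enorm2 v₂ ≠ enorm2 (v₁ + v₂)) ∧
      (enorm2 v₁ ≠ enorm2 (v₁ - v₂) ∧ enorm2 v₂ ≠ enorm2 (v₁ - v₂)) ∧
      min (enorm2 (v₁ + v₂)) (enorm2 (v₁ - v₂)) < max (enorm2 v₁) (enorm2 v₂) := by
  have hsum : e₁ + e₂ = ![1, 1] := by
    subst he₁ he₂; funext i; fin_cases i <;> simp
  have hdiff : e₁ - e₂ = ![1, -1] := by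
    subst he₁ he₂; funext i; fin_cases i <;> simp
  rw [hsum] at h2 h3
  rw [hdiff] at h4 h5
  subst he₁ he₂
  rw [pairEquiv_iff] at h1 h2 h3 h4 h5
  set a := v₁ 0 with ha
  set b := v₁ 1 with hb
  set c := v₂ 0 with hc
  set d := v₂ 1 with hd
  have hdet : a * d - b * c = 1 := by
    rw [Matrix.det_fin_two] at hg
    rw [ha, hb, hc, hd, hv₁, hv₂]
    linarith [hg]
  obtain ⟨k1, k2, k3, k4, k5, k6⟩ := keyInt a b c d hdet h1 h2 h3 h4 h5
  have e2 : ((v₁ + v₂) 0)^2 + ((v₁ + v₂) 1)^2 = (a+c)^2 + (b+d)^2 := by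
    simp [Pi.add_apply]; rfl
  have e3 : ((v₁ - v₂) 0)^2 + ((v₁ - v₂) 1)^2 = (a-c)^2 + (b-d)^2 := by
    simp [Pi.sub_apply]; rfl
  refine ⟨⟨?_, ?_, ?_⟩, ⟨?_, ?_⟩, ?_⟩
  · rw [Ne, enorm2_eq_iff]; exact k1
  · rw [Ne, enorm2_eq_iff, e2]; exact k2
  · rw [Ne, enorm2_eq_iff, e2]; exact k3
  · rw [Ne, enorm2_eq_iff, e3]; exact k4
  · rw [Ne, enorm2_eq_iff, e3]; exact k5
  · rw [min_lt_iff, lt_max_iff, lt_max_iff]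
    rcases min_lt_iff.mp k6 with h | h <;> rcases lt_max_iff.mp h with h | h
    · exact Or.inl (Or.inl (enorm2_lt _ _ (by rw [e2]; exact h)))
    · exact Or.inl (Or.inr (enorm2_lt _ _ (by rw [e2]; exact h)))
    · exact Or.inr (Or.inl (enorm2_lt _ _ (by rw [e3]; exact h)))
    · exact Or.inr (Or.inr (enorm2_lt _ _ (by rw [e3]; exact h)))
end

section
/- Let Q₁ and Q₂ be positive definite quadratic forms on ℝ^m and suppose v ∈ ℤ^m is a minimal vector of both Q₁ and Q₂. Then for every λ ∈ [0, 1], the form Q_λ = λQ₁ + (1−λ)Q₂ is positive definite and v is a minimal vector of Q_λ. (Convexity of the cells of the well-rounded retract.) -/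
open Matrix

/-- The quadratic form `Q(x) = ⟨Ax, x⟩` associated to a real `m × m` matrix `A`. -/
def quadForm {m : ℕ} (A : Matrix (Fin m) (Fin m) ℝ) (x : Fin m → ℝ) : ℝ :=
  (A.mulVec x) ⬝ᵥ x

/-- The value of the quadratic form of `A` at an integer vector `v ∈ ℤ^m ⊆ ℝ^m`. -/
def quadFormInt {m : ℕ} (A : Matrix (Fin m) (Fin m) ℝ) (v : Fin m → ℤ) : ℝ :=
  quadForm A fun i => (v i : ℝ)

lemma quadForm_combo {m : ℕ} (A₁ A₂ : Matrix (Fin m) (Fin m) ℝ) (lam : ℝ)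
    (x : Fin m → ℝ) :
    quadForm (lam • A₁ + (1 - lam) • A₂) x
      = lam * quadForm A₁ x + (1 - lam) * quadForm A₂ x := by
  simp [quadForm, add_mulVec, smul_mulVec, add_dotProduct, smul_dotProduct,
    smul_eq_mul]

/-- Convexity of the cells of the well-rounded retract: if `v ∈ ℤ^m` is a minimal vector
for both positive definite quadratic forms `Q₁` and `Q₂`, then for all `λ ∈ [0, 1]` the
form `Q_λ = λ Q₁ + (1 - λ) Q₂` is positive definite and `v` is a minimal vector of
`Q_λ`. -/
theorem minimalVector_convex (m : ℕ)
    (A₁ A₂ : Matrix (Fin m) (Fin m) ℝ) (hA₁ : A₁.PosDef) (hA₂ : A₂.PosDef)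
    (v : Fin m → ℤ) (hv : v ≠ 0)
    (hmin₁ : ∀ w : Fin m → ℤ, w ≠ 0 → quadFormInt A₁ v ≤ quadFormInt A₁ w)
    (hmin₂ : ∀ w : Fin m → ℤ, w ≠ 0 → quadFormInt A₂ v ≤ quadFormInt A₂ w)
    (lam : ℝ) (h0 : 0 ≤ lam) (h1 : lam ≤ 1) :
    (lam • A₁ + (1 - lam) • A₂).PosDef ∧
      ∀ w : Fin m → ℤ, w ≠ 0 →
        quadFormInt (lam • A₁ + (1 - lam) • A₂) v ≤
          quadFormInt (lam • A₁ + (1 - lam) • A₂) w := by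
  have h1' : (0:ℝ) ≤ 1 - lam := by linarith
  constructor
  · refine posDef_iff_dotProduct_mulVec.mpr ⟨?_, ?_⟩
    · show _ᴴ = _
      have e1 : A₁ᵀ = A₁ := by have h : A₁.IsSymm := by simpa using hA₁.1
                               exact h
      have e2 : A₂ᵀ = A₂ := by have h : A₂.IsSymm := by simpa using hA₂.1
                               exact h
      simp [conjTranspose_add, conjTranspose_smul, e1, e2]
    · intro x hx
      have e : star x ⬝ᵥ ((lam • A₁ + (1 - lam) • A₂) *ᵥ x)
          = lam * (star x ⬝ᵥ (A₁ *ᵥ x)) + (1 - lam) * (star x ⬝ᵥ (A₂ *ᵥ x)) := by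
        simp [add_mulVec, smul_mulVec, dotProduct_add, dotProduct_smul, smul_eq_mul]
      rw [e]
      have p1 := hA₁.dotProduct_mulVec_pos hx
      have p2 := hA₂.dotProduct_mulVec_pos hx
      rcases eq_or_lt_of_le h0 with rfl | hl
      · simpa using p2
      · have := mul_pos hl p1
        nlinarith
  · intro w hw
    simp only [quadFormInt, quadForm_combo]
    have := hmin₁ w hw
    have := hmin₂ w hw
    simp only [quadFormInt] at *
    nlinarith
end
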